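/- arXiv:1801.00581 — 5 statements merged into one kernel-verified Lean document; each statement's English description precedes it below -/
import Mathlib

section
/- For a left-continuous t-norm T, the triangle function ⋆_T is sup-continuous: for any nonempty index set I, any family (F_i)_{i∈I} in Δ⁺ and any L ∈ Δ⁺, one has sup_{i∈I} (F_i ⋆_T L) = (sup_{i∈I} F_i) ⋆_T L. -/
open Filter Topology Set

/-- A (real-domain representation of a) distribution function in Δ⁺ :
nondecreasing, with values in [0,1], left-continuous, vanishing on (-∞,0]. -/
def MemDP (f : ℝ → ℝ) : Prop :=
  Monotone f ∧ (∀ t, 0 ≤ f t) ∧ (∀ t, f t ≤ 1) ∧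
  (∀ t : ℝ, Tendsto f (nhdsWithin t (Set.Iio t)) (nhds (f t))) ∧
  (∀ t ≤ (0:ℝ), f t = 0)

/-- The distribution H₀. -/
noncomputable def H0 : ℝ → ℝ := fun t => if 0 < t then 1 else 0

/-- The distribution H_∞ (zero at every finite point). -/
def Hinf : ℝ → ℝ := fun _ => 0

/-- Pointwise order on distribution functions. -/
def dpLE (f g : ℝ → ℝ) : Prop := ∀ t, f t ≤ g t

/-- Triangle function on Δ⁺. -/
structure IsTriangle (star : (ℝ → ℝ) → (ℝ → ℝ) → (ℝ → ℝ)) : Prop where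
  mem : ∀ f g, MemDP f → MemDP g → MemDP (star f g)
  comm : ∀ f g, MemDP f → MemDP g → star f g = star g f
  assoc : ∀ f g h, MemDP f → MemDP g → MemDP h →
    star f (star g h) = star (star f g) h
  ident : ∀ f, MemDP f → star f H0 = f
  mono : ∀ f g h, MemDP f → MemDP g → MemDP h → dpLE f g → dpLE (star f h) (star g h)

/-- Sup-continuity of a triangle function (suprema in Δ⁺ are pointwise). -/
def SupCont (star : (ℝ → ℝ) → (ℝ → ℝ) → (ℝ → ℝ)) : Prop :=
  ∀ (I : Type) (_ : Nonempty I) (F : I → ℝ → ℝ) (L : ℝ → ℝ),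
    (∀ i, MemDP (F i)) → MemDP L →
    ∀ t, (⨆ i, star (F i) L t) = star (fun s => ⨆ i, F i s) L t

/-- Weak convergence in Δ⁺: pointwise convergence at each continuity point of the limit. -/
def WConv (Fn : ℕ → ℝ → ℝ) (F : ℝ → ℝ) : Prop :=
  ∀ t, ContinuousAt F t → Tendsto (fun n => Fn n t) atTop (nhds (F t))

/-- Continuity of a triangle function w.r.t. weak convergence. -/
def StarCont (star : (ℝ → ℝ) → (ℝ → ℝ) → (ℝ → ℝ)) : Prop :=
  ∀ (Fn Ln : ℕ → ℝ → ℝ) (F L : ℝ → ℝ),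
    (∀ n, MemDP (Fn n)) → (∀ n, MemDP (Ln n)) → MemDP F → MemDP L →
    WConv Fn F → WConv Ln L → WConv (fun n => star (Fn n) (Ln n)) (star F L)

/-- Probabilistic metric space (G, D, ⋆). -/
structure IsPMS {G : Type} (D : G → G → ℝ → ℝ)
    (star : (ℝ → ℝ) → (ℝ → ℝ) → (ℝ → ℝ)) : Prop where
  tri : IsTriangle star
  mem : ∀ p q, MemDP (D p q)
  eq_iff : ∀ p q, D p q = H0 ↔ p = q
  symm : ∀ p q, D p q = D q p
  triangle_ineq : ∀ p q r, dpLE (star (D p q) (D q r)) (D p r)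

/-- Probabilistic invariant metric group. -/
structure IsPIMG {G : Type} [Group G] (D : G → G → ℝ → ℝ)
    (star : (ℝ → ℝ) → (ℝ → ℝ) → (ℝ → ℝ)) extends IsPMS D star : Prop where
  invL : ∀ p q r : G, D (r * p) (r * q) = D p q
  invR : ∀ p q r : G, D (p * r) (q * r) = D p q

/-- Probabilistic 1-Lipschitz map. -/
def Lip1 {G : Type} (D : G → G → ℝ → ℝ) (star : (ℝ → ℝ) → (ℝ → ℝ) → (ℝ → ℝ))
    (f : G → ℝ → ℝ) : Prop :=
  (∀ x, MemDP (f x)) ∧ ∀ x y, dpLE (star (D x y) (f y)) (f x)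

/-- δ_a(y) = D(y,a). -/
def dlt {G : Type} (D : G → G → ℝ → ℝ) (a : G) : G → ℝ → ℝ := fun y => D y a

/-- Sup-convolution (f ⊙ g)(x) = sup_{yz = x} f(y) ⋆ g(z), pointwise. -/
noncomputable def sconv {G : Type} [Group G] (star : (ℝ → ℝ) → (ℝ → ℝ) → (ℝ → ℝ))
    (f g : G → ℝ → ℝ) : G → ℝ → ℝ :=
  fun x t => ⨆ y : G, star (f (x * y⁻¹)) (g y) t

/-- Cauchy sequence for a probabilistic metric: D(a_n, a_p) → H₀ weakly. -/
def PCauchy {G : Type} (D : G → G → ℝ → ℝ) (a : ℕ → G) : Prop :=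
  ∀ t > (0:ℝ), ∀ ε > (0:ℝ), ∃ N, ∀ n ≥ N, ∀ p ≥ N, 1 - ε ≤ D (a n) (a p) t

/-- Π(G): probabilistic 1-Lipschitz maps that are pointwise weak limits of δ_{a_n}
for some Cauchy sequence (a_n). -/
def InPi {G : Type} (D : G → G → ℝ → ℝ) (star : (ℝ → ℝ) → (ℝ → ℝ) → (ℝ → ℝ))
    (f : G → ℝ → ℝ) : Prop :=
  Lip1 D star f ∧ ∃ a : ℕ → G, PCauchy D a ∧ ∀ x, WConv (fun n => D (a n) x) (f x)

/-- 𝔻(f,g) = sup_{x∈G} f(x) ⋆ g(x), pointwise. -/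
noncomputable def DD {G : Type} (star : (ℝ → ℝ) → (ℝ → ℝ) → (ℝ → ℝ))
    (f g : G → ℝ → ℝ) : ℝ → ℝ :=
  fun t => ⨆ x : G, star (f x) (g x) t

/-- t-norm on [0,1]. -/
structure IsTnorm (T : ℝ → ℝ → ℝ) : Prop where
  mem : ∀ x ∈ Set.Icc (0:ℝ) 1, ∀ y ∈ Set.Icc (0:ℝ) 1, T x y ∈ Set.Icc (0:ℝ) 1
  comm : ∀ x y, T x y = T y x
  assoc : ∀ x y z, T x (T y z) = T (T x y) z
  mono : ∀ x y z, y ≤ z → T x y ≤ T x z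
  one : ∀ x ∈ Set.Icc (0:ℝ) 1, T x 1 = x

/-- Left-continuity of a t-norm (in each variable; by commutativity one suffices). -/
def LeftCtsTnorm (T : ℝ → ℝ → ℝ) : Prop :=
  ∀ y x : ℝ, Tendsto (fun s => T s y) (nhdsWithin x (Set.Iio x)) (nhds (T x y))

/-- The triangle function ⋆_T : (F ⋆_T L)(t) = sup_{s+u=t} T(F(s), L(u)). -/
noncomputable def starT (T : ℝ → ℝ → ℝ) (f g : ℝ → ℝ) : ℝ → ℝ :=
  fun t => ⨆ s : ℝ, T (f s) (g (t - s))

/-- for a left-continuous t-norm T, ⋆_T is sup-continuous. -/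
theorem stmt2 (T : ℝ → ℝ → ℝ) (hT : IsTnorm T) (hlc : LeftCtsTnorm T)
    (I : Type) (hI : Nonempty I) (F : I → ℝ → ℝ) (L : ℝ → ℝ)
    (hF : ∀ i, MemDP (F i)) (hL : MemDP L) :
    ∀ t, (⨆ i, starT T (F i) L t) = starT T (fun s => ⨆ i, F i s) L t := by
  intro t
  have hFmem : ∀ i s, F i s ∈ Set.Icc (0:ℝ) 1 := fun i s => ⟨(hF i).2.1 s, (hF i).2.2.1 s⟩
  have hLmem : ∀ s, L s ∈ Set.Icc (0:ℝ) 1 := fun s => ⟨hL.2.1 s, hL.2.2.1 s⟩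
  have hTmono : ∀ y a b, a ≤ b → T a y ≤ T b y := by
    intro y a b h
    rw [hT.comm a y, hT.comm b y]
    exact hT.mono y a b h
  set g : I → ℝ → ℝ := fun i s => T (F i s) (L (t - s)) with hg
  have hgmem : ∀ i s, g i s ∈ Set.Icc (0:ℝ) 1 :=
    fun i s => hT.mem _ (hFmem i s) _ (hLmem (t - s))
  have bddF : ∀ s, BddAbove (Set.range fun i => F i s) := by
    intro s; exact ⟨1, by rintro _ ⟨j, rfl⟩; exact (hFmem j s).2⟩
  have bddgi : ∀ i, BddAbove (Set.range (g i)) := by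
    intro i; exact ⟨1, by rintro _ ⟨s, rfl⟩; exact (hgmem i s).2⟩
  have bddgs : ∀ s, BddAbove (Set.range fun i => g i s) := by
    intro s; exact ⟨1, by rintro _ ⟨i, rfl⟩; exact (hgmem i s).2⟩
  have key : ∀ s, T (⨆ i, F i s) (L (t - s)) = ⨆ i, T (F i s) (L (t - s)) := by
    intro s
    set y := L (t - s)
    set c := ⨆ i, F i s with hc
    apply le_antisymm
    · refine le_of_tendsto (hlc y c) ?_
      filter_upwards [self_mem_nhdsWithin] with a ha
      obtain ⟨i, hi⟩ := exists_lt_of_lt_ciSup (show a < ⨆ i, F i s from ha)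
      exact le_trans (hTmono y a (F i s) hi.le) (le_ciSup (bddgs s) i)
    · exact ciSup_le fun i => hTmono y _ _ (le_ciSup (bddF s) i)
  have RHS : starT T (fun s => ⨆ i, F i s) L t = ⨆ s, ⨆ i, g i s := by
    unfold starT
    exact iSup_congr key
  rw [RHS]
  have LHS : (⨆ i, starT T (F i) L t) = ⨆ i, ⨆ s, g i s := rfl
  rw [LHS]
  have bddA : BddAbove (Set.range fun i => ⨆ s, g i s) := by
    refine ⟨1, ?_⟩
    rintro _ ⟨i, rfl⟩
    exact ciSup_le fun s => (hgmem i s).2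
  have bddB : BddAbove (Set.range fun s => ⨆ i, g i s) := by
    refine ⟨1, ?_⟩
    rintro _ ⟨s, rfl⟩
    exact ciSup_le fun i => (hgmem i s).2
  apply le_antisymm
  · exact ciSup_le fun i => ciSup_le fun s =>
      le_trans (le_ciSup (bddgs s) i) (le_ciSup bddB s)
  · exact ciSup_le fun s => ciSup_le fun i =>
      le_trans (le_ciSup (bddgi i) s) (le_ciSup bddA i)
end

section
/- Let (G,D,⋆) be a probabilistic metric space with ⋆ continuous. Then every probabilistic 1-Lipschitz map f : G → Δ⁺ is continuous: if D(x_n,x) → H_0 weakly, then f(x_n) → f(x) weakly. -/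
open Filter Topology Set

lemma memDP_H0 : MemDP H0 := by
  refine ⟨?_, ?_, ?_, ?_, ?_⟩
  · intro a b hab
    unfold H0
    by_cases hp : 0 < a
    · simp [hp, lt_of_lt_of_le hp hab]
    · by_cases hp' : 0 < b <;> simp [hp, hp']
  · intro t; unfold H0; split <;> norm_num
  · intro t; unfold H0; split <;> norm_num
  · intro t
    rcases le_or_gt t 0 with hle | hlt
    · have hz : ∀ s ∈ Set.Iio t, H0 s = H0 t := by
        intro s hs; unfold H0
        simp only [Set.mem_Iio] at hs
        simp [not_lt.2 (le_of_lt (lt_of_lt_of_le hs hle)), not_lt.2 hle]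
      refine Tendsto.congr' ?_ tendsto_const_nhds
      filter_upwards [self_mem_nhdsWithin] with s hs using (hz s hs).symm
    · have hmem : Set.Ioo 0 t ∈ nhdsWithin t (Set.Iio t) := by
        apply mem_nhdsWithin.2
        exact ⟨Set.Ioi 0, isOpen_Ioi, hlt, fun s hs => ⟨hs.1, hs.2⟩⟩
      refine Tendsto.congr' ?_ tendsto_const_nhds
      filter_upwards [hmem] with s hs
      unfold H0; simp [hs.1, hlt]
  · intro t ht; unfold H0; simp [not_lt.2 ht]

/-- Step distribution of height `c` with jump at `a > 0`. -/
noncomputable def stepDP (a c : ℝ) : ℝ → ℝ := fun u => if a < u then c else 0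

lemma memDP_step {a c : ℝ} (ha : 0 < a) (hc0 : 0 ≤ c) (hc1 : c ≤ 1) :
    MemDP (stepDP a c) := by
  refine ⟨?_, ?_, ?_, ?_, ?_⟩
  · intro u v huv
    unfold stepDP
    by_cases hp : a < u
    · simp [hp, lt_of_lt_of_le hp huv]
    · by_cases hp' : a < v <;> simp [hp, hp', hc0]
  · intro u; unfold stepDP; split <;> simp [hc0]
  · intro u; unfold stepDP; split <;> linarith
  · intro u
    rcases le_or_gt u a with hle | hlt
    · have hz : ∀ s ∈ Set.Iio u, stepDP a c s = stepDP a c u := by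
        intro s hs; unfold stepDP
        simp only [Set.mem_Iio] at hs
        simp [not_lt.2 (le_of_lt (lt_of_lt_of_le hs hle)), not_lt.2 hle]
      refine Tendsto.congr' ?_ tendsto_const_nhds
      filter_upwards [self_mem_nhdsWithin] with s hs using (hz s hs).symm
    · have hmem : Set.Ioo a u ∈ nhdsWithin u (Set.Iio u) := by
        apply mem_nhdsWithin.2
        exact ⟨Set.Ioi a, isOpen_Ioi, hlt, fun s hs => ⟨hs.1, hs.2⟩⟩
      refine Tendsto.congr' ?_ tendsto_const_nhds
      filter_upwards [hmem] with s hs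
      unfold stepDP; simp [hs.1, hlt]
  · intro u hu; unfold stepDP
    simp [not_lt.2 (le_of_lt (lt_of_le_of_lt hu ha))]

/-- if ⋆ is continuous, every probabilistic 1-Lipschitz map is continuous. -/
theorem stmt6 {G : Type} (D : G → G → ℝ → ℝ)
    (star : (ℝ → ℝ) → (ℝ → ℝ) → (ℝ → ℝ)) (h : IsPMS D star)
    (hc : StarCont star) (f : G → ℝ → ℝ) (hf : Lip1 D star f)
    (x : G) (xn : ℕ → G) (hx : WConv (fun n => D (xn n) x) H0) :
    WConv (fun n => f (xn n)) (f x) := by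
  obtain ⟨hfmem, hflip⟩ := hf
  intro t ht
  rcases le_or_gt t 0 with ht0 | ht0
  · have h1 : ∀ n, f (xn n) t = 0 := fun n => (hfmem (xn n)).2.2.2.2 t ht0
    have h2 : f x t = 0 := (hfmem x).2.2.2.2 t ht0
    rw [h2]
    exact Tendsto.congr (fun n => (h1 n).symm) tendsto_const_nhds
  -- the lower-bound sequence: star (D (xn n) x) (f x) ≤ f (xn n), converging weakly to f x
  have hH0fx : star H0 (f x) = f x := by
    rw [h.tri.comm H0 (f x) memDP_H0 (hfmem x), h.tri.ident (f x) (hfmem x)]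
  have hlow : Tendsto (fun n => star (D (xn n) x) (f x) t) atTop (nhds (f x t)) := by
    have := hc (fun n => D (xn n) x) (fun _ => f x) H0 (f x)
      (fun n => h.mem (xn n) x) (fun _ => hfmem x) memDP_H0 (hfmem x) hx
      (fun u _ => tendsto_const_nhds) t (by rwa [hH0fx])
    rwa [hH0fx] at this
  have hlowle : ∀ n, star (D (xn n) x) (f x) t ≤ f (xn n) t :=
    fun n => hflip (xn n) x t
  -- main argument via subsequences
  apply tendsto_of_subseq_tendsto
  intro ns hns
  -- extract a convergent sub-subsequence of the values f (xn (ns k)) t in [0,1]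
  have hval : ∀ k, f (xn (ns k)) t ∈ Set.Icc (0:ℝ) 1 :=
    fun k => ⟨(hfmem (xn (ns k))).2.1 t, (hfmem (xn (ns k))).2.2.1 t⟩
  obtain ⟨c, hcmem, φ, hφ, hφt⟩ :=
    (isCompact_Icc (a := (0:ℝ)) (b := 1)).tendsto_subseq hval
  set m : ℕ → ℕ := fun k => ns (φ k) with hm
  have hmt : Tendsto m atTop atTop := hns.comp hφ.tendsto_atTop
  have hct : Tendsto (fun k => f (xn (m k)) t) atTop (nhds c) := hφt
  -- Step 1: f x t ≤ c
  have hfxc : f x t ≤ c := by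
    refine le_of_tendsto_of_tendsto' (hlow.comp hmt) hct ?_
    intro k; exact hlowle (m k)
  -- Step 2: c ≤ f x t
  have hcfx : c ≤ f x t := by
    -- step functions
    set Sk : ℕ → ℝ → ℝ := fun k => stepDP t (f (xn (m k)) t) with hSk
    set S : ℝ → ℝ := fun u => stepDP t c u with hS
    have hSkmem : ∀ k, MemDP (Sk k) :=
      fun k => memDP_step ht0 ((hfmem (xn (m k))).2.1 t) ((hfmem (xn (m k))).2.2.1 t)
    have hSmem : MemDP S := memDP_step ht0 hcmem.1 hcmem.2
    have hSkconv : WConv Sk S := by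
      intro u _
      by_cases hu : t < u
      · simpa [hSk, hS, stepDP, hu] using hct
      · simp [hSk, hS, stepDP, hu]
    -- D x (xn (m k)) converges weakly to H0
    have hDconv : WConv (fun k => D x (xn (m k))) H0 := by
      intro u hu
      have := (hx u hu).comp hmt
      simpa [h.symm x, Function.comp_def] using this
    -- star (D x (xn (m k))) (Sk k) → star H0 S = S weakly
    have hH0S : star H0 S = S := by
      rw [h.tri.comm H0 S memDP_H0 hSmem, h.tri.ident S hSmem]
    have hstconv : WConv (fun k => star (D x (xn (m k))) (Sk k)) S := by
      have := hc (fun k => D x (xn (m k))) Sk H0 S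
        (fun k => h.mem x (xn (m k))) hSkmem memDP_H0 hSmem hDconv hSkconv
      rwa [hH0S] at this
    -- star (D x (xn (m k))) (Sk k) ≤ f x pointwise
    have hstle : ∀ k u, star (D x (xn (m k))) (Sk k) u ≤ f x u := by
      intro k u
      have h1 : dpLE (Sk k) (f (xn (m k))) := by
        intro v
        by_cases hv : t < v
        · simpa [hSk, stepDP, hv] using (hfmem (xn (m k))).1 (le_of_lt hv)
        · simpa [hSk, stepDP, hv] using (hfmem (xn (m k))).2.1 v
      have h2 : dpLE (star (D x (xn (m k))) (Sk k))
          (star (D x (xn (m k))) (f (xn (m k)))) := by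
        rw [h.tri.comm (D x (xn (m k))) (Sk k) (h.mem x (xn (m k))) (hSkmem k),
          h.tri.comm (D x (xn (m k))) (f (xn (m k))) (h.mem x (xn (m k)))
            (hfmem (xn (m k)))]
        exact h.tri.mono (Sk k) (f (xn (m k))) (D x (xn (m k))) (hSkmem k)
          (hfmem (xn (m k))) (h.mem x (xn (m k))) h1
      exact le_trans (h2 u) (hflip x (xn (m k)) u)
    -- hence S u ≤ f x u at every u > t (such u are continuity points of S)
    have hSle : ∀ u, t < u → c ≤ f x u := by
      intro u hu
      have hcont : ContinuousAt S u := by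
        have : S =ᶠ[nhds u] (fun _ => c) := by
          filter_upwards [Ioi_mem_nhds hu] with v hv
          simp [hS, stepDP, Set.mem_Ioi.1 hv]
        exact (continuousAt_const (y := c)).congr this.symm
      have hlim : Tendsto (fun k => star (D x (xn (m k))) (Sk k) u) atTop (nhds (S u)) :=
        hstconv u hcont
      have : S u ≤ f x u := le_of_tendsto hlim (Eventually.of_forall (fun k => hstle k u))
      simpa [hS, stepDP, hu] using this
    -- finally use right-continuity of f x at t (from ContinuousAt)
    have hseq : Tendsto (fun j : ℕ => t + 1 / (j + 1 : ℝ)) atTop (nhds t) := by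
      have := tendsto_one_div_add_atTop_nhds_zero_nat (𝕜 := ℝ)
      have h' := tendsto_const_nhds (x := t) (f := atTop (α := ℕ)) |>.add this
      simpa using h'
    have hfx : Tendsto (fun j : ℕ => f x (t + 1 / (j + 1 : ℝ))) atTop (nhds (f x t)) :=
      ht.tendsto.comp hseq
    refine ge_of_tendsto hfx (Eventually.of_forall ?_)
    intro j
    have : t < t + 1 / (j + 1 : ℝ) := by
      have : (0:ℝ) < 1 / (j + 1 : ℝ) := by positivity
      linarith
    exact hSle _ this
  exact ⟨φ, by rw [le_antisymm hfxc hcfx]; exact hct⟩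
end

section
/- (Probabilistic McShane extension) Let (G,D,⋆) be a probabilistic metric space with ⋆ sup-continuous, A ⊆ G nonempty, and f : A → Δ⁺ a probabilistic 1-Lipschitz map on A. Then the map f̃(x) := sup_{a∈A} D(a,x) ⋆ f(a) is a probabilistic 1-Lipschitz map on G whose restriction to A equals f. -/
open Filter Topology Set

lemma memDP_iSup {I : Type} [Nonempty I] (F : I → ℝ → ℝ)
    (h : ∀ i, MemDP (F i)) : MemDP (fun t => ⨆ i, F i t) := by
  have hbdd : ∀ t : ℝ, BddAbove (Set.range fun i => F i t) := by
    intro t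
    exact ⟨1, by rintro v ⟨i, rfl⟩; exact (h i).2.2.1 t⟩
  have hmono : Monotone (fun t => ⨆ i, F i t) := by
    intro s t hst
    exact ciSup_mono (hbdd t) (fun i => (h i).1 hst)
  refine ⟨hmono, ?_, ?_, ?_, ?_⟩
  · intro t
    exact le_trans ((h (Classical.arbitrary I)).2.1 t)
      (le_ciSup (hbdd t) (Classical.arbitrary I))
  · intro t
    exact ciSup_le (fun i => (h i).2.2.1 t)
  · intro t
    have key : sSup ((fun s => ⨆ i, F i s) '' Set.Iio t) = ⨆ i, F i t := by
      apply le_antisymm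
      · apply csSup_le ((Set.nonempty_Iio).image _)
        rintro v ⟨s, hs, rfl⟩
        exact hmono (le_of_lt hs)
      · apply ciSup_le
        intro i
        have h1 : Tendsto (F i) (nhdsWithin t (Set.Iio t)) (nhds (sSup (F i '' Set.Iio t))) :=
          (h i).1.tendsto_nhdsLT t
        have h2 : F i t = sSup (F i '' Set.Iio t) := tendsto_nhds_unique ((h i).2.2.2.1 t) h1
        rw [h2]
        apply csSup_le ((Set.nonempty_Iio).image _)
        rintro v ⟨s, hs, rfl⟩
        refine le_trans (le_ciSup (hbdd s) i) ?_
        exact le_csSup (by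
          refine ⟨1, ?_⟩
          rintro w ⟨u, _, rfl⟩
          exact ciSup_le fun j => (h j).2.2.1 u) ⟨s, hs, rfl⟩
    have := hmono.tendsto_nhdsLT t
    rwa [key] at this
  · intro t ht
    have : ∀ i, F i t = 0 := fun i => (h i).2.2.2.2 t ht
    simp only [this]
    exact ciSup_const

/-- probabilistic McShane: extension of a probabilistic 1-Lipschitz
map from A to all of G by f̃(x) = sup_{a∈A} D(a,x) ⋆ f(a). -/
theorem stmt7 {G : Type} (D : G → G → ℝ → ℝ)
    (star : (ℝ → ℝ) → (ℝ → ℝ) → (ℝ → ℝ)) (h : IsPMS D star)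
    (hsc : SupCont star) (A : Set G) (hA : A.Nonempty) (f : G → ℝ → ℝ)
    (hmem : ∀ a ∈ A, MemDP (f a))
    (hlip : ∀ a ∈ A, ∀ b ∈ A, dpLE (star (D a b) (f b)) (f a)) :
    Lip1 D star (fun x t => ⨆ a : A, star (D (a : G) x) (f a) t) ∧
    ∀ a ∈ A, (fun t => ⨆ b : A, star (D (b : G) a) (f b) t) = f a := by
  haveI : Nonempty A := hA.to_subtype
  -- each term is in MemDP
  have hterm : ∀ (x : G) (a : A), MemDP (star (D (a : G) x) (f a)) := fun x a =>
    h.tri.mem _ _ (h.mem a x) (hmem a a.2)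
  -- the extension is in MemDP
  have htilde : ∀ x : G, MemDP (fun t => ⨆ a : A, star (D (a : G) x) (f a) t) := fun x =>
    memDP_iSup _ (hterm x)
  -- bddAbove helper
  have hbdd : ∀ (x : G) (t : ℝ),
      BddAbove (Set.range fun a : A => star (D (a : G) x) (f a) t) := by
    intro x t
    exact ⟨1, by rintro v ⟨a, rfl⟩; exact (hterm x a).2.2.1 t⟩
  constructor
  · refine ⟨htilde, ?_⟩
    intro x y t
    -- commute the star with the sup
    have hcomm : star (D x y) (fun s => ⨆ a : A, star (D (a : G) y) (f a) s)
        = star (fun s => ⨆ a : A, star (D (a : G) y) (f a) s) (D x y) :=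
      h.tri.comm _ _ (h.mem x y) (htilde y)
    rw [hcomm]
    rw [← hsc A inferInstance (fun a : A => star (D (a : G) y) (f a)) (D x y)
      (hterm y) (h.mem x y) t]
    apply ciSup_le
    intro a
    -- star (star (D a y) (f a)) (D x y) ≤ star (D a x) (f a)
    have e1 : star (star (D (a : G) y) (f a)) (D x y)
        = star (D x y) (star (D (a : G) y) (f a)) :=
      h.tri.comm _ _ (hterm y a) (h.mem x y)
    have e2 : star (D x y) (star (D (a : G) y) (f a))
        = star (star (D x y) (D (a : G) y)) (f a) :=
      h.tri.assoc _ _ _ (h.mem x y) (h.mem a y) (hmem a a.2)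
    have e3 : star (D x y) (D (a : G) y) = star (D (a : G) y) (D y x) := by
      rw [h.tri.comm _ _ (h.mem x y) (h.mem a y), h.symm x y]
    have htr : dpLE (star (D (a : G) y) (D y x)) (D (a : G) x) :=
      h.triangle_ineq a y x
    have hmono' : dpLE (star (star (D (a : G) y) (D y x)) (f a))
        (star (D (a : G) x) (f a)) :=
      h.tri.mono _ _ _ (h.tri.mem _ _ (h.mem a y) (h.mem y x)) (h.mem a x)
        (hmem a a.2) htr
    calc star (star (D (a : G) y) (f a)) (D x y) t
        = star (star (D (a : G) y) (D y x)) (f a) t := by rw [e1, e2, e3]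
      _ ≤ star (D (a : G) x) (f a) t := hmono' t
      _ ≤ ⨆ b : A, star (D (b : G) x) (f b) t := le_ciSup (hbdd x t) a
  · intro a ha
    funext t
    apply le_antisymm
    · apply ciSup_le
      intro b
      have : D (b : G) a = D a (b : G) := h.symm b a
      rw [this]
      exact hlip a ha b b.2 t
    · have hH0 : D a a = H0 := (h.eq_iff a a).2 rfl
      have : star (D a a) (f a) = f a := by
        rw [hH0, h.tri.comm _ _ (by rw [← hH0]; exact h.mem a a) (hmem a ha),
          h.tri.ident _ (hmem a ha)]
      calc f a t = star (D a a) (f a) t := by rw [this]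
        _ ≤ ⨆ b : A, star (D (b : G) a) (f b) t := le_ciSup (hbdd a t) ⟨a, ha⟩
end

section
/- Let (G,·,D,⋆) be a probabilistic invariant metric group with identity e. Then a map f : G → Δ⁺ is probabilistic 1-Lipschitz if and only if f ⊙ δ_e = δ_e ⊙ f = f, where ⊙ is the sup-convolution and δ_e(y) = D(y,e). -/
open Filter Topology Set

/-- f is probabilistic 1-Lipschitz iff f ⊙ δ_e = δ_e ⊙ f = f. -/
theorem stmt9 {G : Type} [Group G] (D : G → G → ℝ → ℝ)
    (star : (ℝ → ℝ) → (ℝ → ℝ) → (ℝ → ℝ)) (h : IsPIMG D star)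
    (f : G → ℝ → ℝ) (hmem : ∀ x, MemDP (f x)) :
    (∀ x y, dpLE (star (D x y) (f y)) (f x)) ↔
      (sconv star f (dlt D 1) = f ∧ sconv star (dlt D 1) f = f) := by
  have hD11 : D (1:G) 1 = H0 := (h.eq_iff 1 1).mpr rfl
  constructor
  · intro hlip
    -- bounds for the two convolutions
    have hb1 : ∀ (x : G) (t : ℝ) (y : G), star (f (x * y⁻¹)) (dlt D 1 y) t ≤ f x t := by
      intro x t y
      have e1 : D x (x * y⁻¹) = D 1 y⁻¹ := by simpa using h.invL 1 y⁻¹ x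
      have e2 : D y 1 = D 1 y⁻¹ := by simpa using h.invR 1 y⁻¹ y
      have h1 : dlt D 1 y = D x (x * y⁻¹) := by
        show D y 1 = _
        rw [e2, e1]
      have hcomm : star (f (x * y⁻¹)) (dlt D 1 y) = star (dlt D 1 y) (f (x * y⁻¹)) :=
        h.tri.comm _ _ (hmem _) (h.mem _ _)
      calc star (f (x * y⁻¹)) (dlt D 1 y) t
          = star (D x (x * y⁻¹)) (f (x * y⁻¹)) t := by rw [hcomm, h1]
        _ ≤ f x t := hlip x _ t
    have hb2 : ∀ (x : G) (t : ℝ) (y : G), star (dlt D 1 (x * y⁻¹)) (f y) t ≤ f x t := by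
      intro x t y
      have h1 : dlt D 1 (x * y⁻¹) = D x y := by
        show D (x * y⁻¹) 1 = D x y
        have := h.invR (x * y⁻¹) 1 y
        simpa using this.symm
      rw [h1]
      exact hlip x y t
    constructor
    · funext x t
      refine le_antisymm (ciSup_le (fun y => hb1 x t y)) ?_
      have hval : star (f (x * (1:G)⁻¹)) (dlt D 1 1) t = f x t := by
        have : dlt D 1 (1:G) = H0 := hD11
        rw [this]
        simp only [inv_one, mul_one]
        rw [h.tri.ident _ (hmem x)]
      calc f x t = star (f (x * (1:G)⁻¹)) (dlt D 1 1) t := hval.symm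
        _ ≤ ⨆ y : G, star (f (x * y⁻¹)) (dlt D 1 y) t := by
            refine le_ciSup (f := fun y : G => star (f (x * y⁻¹)) (dlt D 1 y) t)
              ⟨f x t, ?_⟩ (1 : G)
            rintro _ ⟨y, rfl⟩; exact hb1 x t y
    · funext x t
      refine le_antisymm (ciSup_le (fun y => hb2 x t y)) ?_
      have hval : star (dlt D 1 (x * x⁻¹)) (f x) t = f x t := by
        have h1 : dlt D 1 (x * x⁻¹) = H0 := by
          simp only [mul_inv_cancel]; exact hD11
        rw [h1, h.tri.comm _ _ (hD11 ▸ h.mem 1 1) (hmem x),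
          h.tri.ident _ (hmem x)]
      calc f x t = star (dlt D 1 (x * x⁻¹)) (f x) t := hval.symm
        _ ≤ ⨆ y : G, star (dlt D 1 (x * y⁻¹)) (f y) t := by
            refine le_ciSup (f := fun y : G => star (dlt D 1 (x * y⁻¹)) (f y) t)
              ⟨f x t, ?_⟩ x
            rintro _ ⟨y, rfl⟩; exact hb2 x t y
  · rintro ⟨-, h2⟩ x y t
    have hfx : f x t = ⨆ z : G, star (dlt D 1 (x * z⁻¹)) (f z) t :=
      (congrFun (congrFun h2 x) t).symm
    have h1 : dlt D 1 (x * y⁻¹) = D x y := by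
      show D (x * y⁻¹) 1 = D x y
      have := h.invR (x * y⁻¹) 1 y
      simpa using this.symm
    have hbdd : BddAbove (Set.range fun z : G => star (dlt D 1 (x * z⁻¹)) (f z) t) := by
      refine ⟨1, ?_⟩
      rintro _ ⟨z, rfl⟩
      exact (h.tri.mem _ _ (h.mem _ _) (hmem z)).2.2.1 t
    calc star (D x y) (f y) t = star (dlt D 1 (x * y⁻¹)) (f y) t := by rw [h1]
      _ ≤ ⨆ z : G, star (dlt D 1 (x * z⁻¹)) (f z) t := le_ciSup hbdd y
      _ = f x t := hfx.symm
end

section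
/- Let (G,D,⋆) be a probabilistic metric space with ⋆ continuous, and (a_n) ⊆ G a Cauchy sequence. Then there exists a probabilistic 1-Lipschitz map f : G → Δ⁺ such that D(a_n,x) → f(x) weakly for every x ∈ G, and in particular f(a_n) → H_0 weakly. -/
open Filter Topology Set

lemma bdd_le {u : ℕ → ℝ} (h : ∀ n, u n ≤ 1) : Filter.IsBoundedUnder (· ≤ ·) atTop u :=
  Filter.isBoundedUnder_of ⟨1, h⟩

lemma bdd_ge {u : ℕ → ℝ} (h : ∀ n, 0 ≤ u n) : Filter.IsBoundedUnder (· ≥ ·) atTop u :=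
  Filter.isBoundedUnder_of ⟨0, h⟩

/-- Left regularization. -/
noncomputable def lreg (L : ℝ → ℝ) : ℝ → ℝ := fun t => sSup (L '' Iio t)

lemma lreg_aux (L : ℝ → ℝ) (hmono : Monotone L) (h0 : ∀ s, 0 ≤ L s) (h1 : ∀ s, L s ≤ 1)
    (hz : ∀ s ≤ (0:ℝ), L s = 0) :
    MemDP (lreg L) ∧ (∀ s t, s < t → L s ≤ lreg L t) ∧ (∀ t, lreg L t ≤ L t) := by
  have hbdd : ∀ t : ℝ, BddAbove (L '' Iio t) := fun t => ⟨1, by rintro x ⟨s, -, rfl⟩; exact h1 s⟩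
  have hne : ∀ t : ℝ, (L '' Iio t).Nonempty := fun t => ⟨L (t - 1), ⟨t - 1, by simp, rfl⟩⟩
  have hle : ∀ s t, s < t → L s ≤ lreg L t := fun s t hst =>
    le_csSup (hbdd t) ⟨s, hst, rfl⟩
  have hub : ∀ t, lreg L t ≤ L t := fun t =>
    csSup_le (hne t) (by rintro x ⟨s, hs, rfl⟩; exact hmono hs.le)
  have hmono' : Monotone (lreg L) := by
    intro s t hst
    exact csSup_le_csSup (hbdd t) (hne s) (image_mono (Iio_subset_Iio hst))
  refine ⟨⟨hmono', ?_, ?_, ?_, ?_⟩, hle, hub⟩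
  · intro t; exact le_trans (h0 (t-1)) (hle (t-1) t (by linarith))
  · intro t; exact (hub t).trans (h1 t)
  · intro t
    have h := hmono'.tendsto_nhdsLT t
    have hbdd2 : BddAbove (lreg L '' Iio t) := by
      refine ⟨1, ?_⟩; rintro x ⟨u, -, rfl⟩; exact (hub u).trans (h1 u)
    have hne2 : (lreg L '' Iio t).Nonempty := ⟨lreg L (t-1), ⟨t-1, by simp, rfl⟩⟩
    have heq : sSup (lreg L '' Iio t) = lreg L t := by
      apply le_antisymm
      · exact csSup_le hne2 (by rintro x ⟨s, hs, rfl⟩; exact hmono' hs.le)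
      · apply csSup_le (hne t)
        rintro x ⟨s, hs, rfl⟩
        have hs' : s < t := hs
        calc L s ≤ lreg L ((s + t)/2) := hle s _ (by linarith)
          _ ≤ sSup (lreg L '' Iio t) := le_csSup hbdd2 ⟨(s+t)/2, by
              constructor
              · show (s+t)/2 < t; linarith
              · rfl⟩
    rwa [heq] at h
  · intro t ht
    apply le_antisymm
    · apply csSup_le (hne t)
      rintro x ⟨s, hs, rfl⟩
      rw [hz s (le_of_lt (lt_of_lt_of_le hs ht))]
    · exact le_trans (h0 (t-1)) (hle (t-1) t (by linarith))

lemma exists_continuousAt_mem_Ioo (M : ℝ → ℝ) (hM : Monotone M) {s t : ℝ} (h : s < t) :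
    ∃ τ, τ ∈ Ioo s t ∧ ContinuousAt M τ := by
  by_contra hcon
  push_neg at hcon
  have hsub : Ioo s t ⊆ {x | ¬ContinuousAt M x} := fun x hx => hcon x hx
  have hcount : (Ioo s t).Countable := (hM.countable_not_continuousAt).mono hsub
  have hle := hcount.le_aleph0
  rw [Cardinal.mk_Ioo_real h] at hle
  exact absurd hle (by simp [Cardinal.aleph0_lt_continuum.not_ge])

/-- Criterion for weak convergence. -/
lemma wconv_of (F : ℕ → ℝ → ℝ) (M : ℝ → ℝ) (hM : MemDP M)
    (h0 : ∀ n t, 0 ≤ F n t) (h1 : ∀ n t, F n t ≤ 1)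
    (hlow : ∀ s t : ℝ, s < t → M s ≤ Filter.liminf (fun n => F n t) atTop)
    (hup : ∀ s t : ℝ, s < t → Filter.limsup (fun n => F n s) atTop ≤ M t) :
    WConv F M := by
  intro t hcont
  have hb1 : Filter.IsBoundedUnder (· ≤ ·) atTop (fun n => F n t) := bdd_le (fun n => h1 n t)
  have hb0 : Filter.IsBoundedUnder (· ≥ ·) atTop (fun n => F n t) := bdd_ge (fun n => h0 n t)
  refine tendsto_of_le_liminf_of_limsup_le ?_ ?_ hb1 hb0
  · have hev : ∀ s ∈ Iio t, M s ≤ Filter.liminf (fun n => F n t) atTop := fun s hs => hlow s t hs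
    have hlc := hM.2.2.2.1 t
    exact le_of_tendsto hlc (by filter_upwards [self_mem_nhdsWithin] with s hs using hev s hs)
  · have hev : ∀ s ∈ Ioi t, Filter.limsup (fun n => F n t) atTop ≤ M s := fun s hs => hup t s hs
    have htend : Tendsto M (𝓝[>] t) (𝓝 (M t)) := hcont.continuousWithinAt.tendsto
    exact ge_of_tendsto htend (by filter_upwards [self_mem_nhdsWithin] with s hs using hev s hs)

/-- Helly's selection theorem. -/
lemma helly (F : ℕ → ℝ → ℝ) (hF : ∀ n, MemDP (F n)) :
    ∃ (φ : ℕ → ℕ) (M : ℝ → ℝ), StrictMono φ ∧ MemDP M ∧ WConv (fun k => F (φ k)) M := by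
  set x : ℕ → ℚ → ℝ := fun n q => F n q with hx
  have hcomp : IsCompact (Set.univ.pi (fun _ : ℚ => Icc (0:ℝ) 1)) :=
    isCompact_univ_pi (fun _ => isCompact_Icc)
  have hmem : ∀ n, x n ∈ Set.univ.pi (fun _ : ℚ => Icc (0:ℝ) 1) := by
    intro n
    rw [Set.mem_univ_pi]
    exact fun q => ⟨(hF n).2.1 q, (hF n).2.2.1 q⟩
  obtain ⟨g, -, φ, hφ, htend⟩ := hcomp.tendsto_subseq hmem
  rw [tendsto_pi_nhds] at htend
  have hg0 : ∀ q : ℚ, 0 ≤ g q := fun q =>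
    le_of_tendsto_of_tendsto tendsto_const_nhds (htend q)
      (Eventually.of_forall fun k => (hF (φ k)).2.1 q)
  have hg1 : ∀ q : ℚ, g q ≤ 1 := fun q =>
    le_of_tendsto_of_tendsto (htend q) tendsto_const_nhds
      (Eventually.of_forall fun k => (hF (φ k)).2.2.1 q)
  have hgz : ∀ q : ℚ, (q:ℝ) ≤ 0 → g q = 0 := by
    intro q hq
    have hz : ∀ k, F (φ k) q = 0 := fun k => (hF (φ k)).2.2.2.2 q hq
    have h2 : Tendsto (fun k => F (φ k) (q:ℝ)) atTop (𝓝 0) := by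
      simp only [hz]; exact tendsto_const_nhds
    exact tendsto_nhds_unique (htend q) h2
  set Gr : ℝ → ℝ := fun s => sSup (g '' {q : ℚ | (q:ℝ) ≤ s}) with hGr
  have hGrbdd : ∀ s : ℝ, BddAbove (g '' {q : ℚ | (q:ℝ) ≤ s}) := fun s =>
    ⟨1, by rintro y ⟨q, -, rfl⟩; exact hg1 q⟩
  have hGrne : ∀ s : ℝ, (g '' {q : ℚ | (q:ℝ) ≤ s}).Nonempty := by
    intro s
    obtain ⟨q, -, hq⟩ := exists_rat_btwn (show s - 1 < s by linarith)
    exact ⟨g q, ⟨q, le_of_lt hq, rfl⟩⟩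
  have hGrmono : Monotone Gr := by
    intro s t hst
    exact csSup_le_csSup (hGrbdd t) (hGrne s) (image_mono (fun q hq => le_trans hq hst))
  have hGr0 : ∀ s, 0 ≤ Gr s := by
    intro s
    obtain ⟨q, -, hq⟩ := exists_rat_btwn (show s - 1 < s by linarith)
    exact le_trans (hg0 q) (le_csSup (hGrbdd s) ⟨q, le_of_lt hq, rfl⟩)
  have hGr1 : ∀ s, Gr s ≤ 1 := fun s => csSup_le (hGrne s) (by rintro y ⟨q, -, rfl⟩; exact hg1 q)
  have hGrz : ∀ s ≤ (0:ℝ), Gr s = 0 := by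
    intro s hs
    refine le_antisymm (csSup_le (hGrne s) ?_) (hGr0 s)
    rintro y ⟨q, hq, rfl⟩
    rw [hgz q (le_trans hq hs)]
  have hgle : ∀ q : ℚ, ∀ s : ℝ, (q:ℝ) ≤ s → g q ≤ Gr s := fun q s hqs =>
    le_csSup (hGrbdd s) ⟨q, hqs, rfl⟩
  obtain ⟨hMemM, hleM, hubM⟩ := lreg_aux Gr hGrmono hGr0 hGr1 hGrz
  refine ⟨φ, lreg Gr, hφ, hMemM, ?_⟩
  apply wconv_of _ _ hMemM (fun k t => (hF (φ k)).2.1 t) (fun k t => (hF (φ k)).2.2.1 t)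
  · intro s t hst
    apply csSup_le ((Set.nonempty_Iio).image _)
    rintro y ⟨s', hs', rfl⟩
    apply csSup_le (hGrne s')
    rintro y ⟨q, hq, rfl⟩
    have hqt : (q:ℝ) < t := lt_of_le_of_lt (le_trans hq (le_of_lt hs')) hst
    rw [← (htend q).liminf_eq]
    refine Filter.liminf_le_liminf (Eventually.of_forall fun k => (hF (φ k)).1 hqt.le)
      (bdd_ge (fun k => (hF (φ k)).2.1 q))
      (bdd_le (fun k => (hF (φ k)).2.2.1 t)).isCoboundedUnder_ge
  · intro s t hst
    obtain ⟨q, hq1, hq2⟩ := exists_rat_btwn hst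
    have h2 : Filter.limsup (fun k => F (φ k) s) atTop ≤ g q := by
      rw [← (htend q).limsup_eq]
      refine Filter.limsup_le_limsup (Eventually.of_forall fun k => (hF (φ k)).1 hq1.le)
        (bdd_ge (fun k => (hF (φ k)).2.1 s)).isCoboundedUnder_le
        (bdd_le (fun k => (hF (φ k)).2.2.1 q))
    refine h2.trans ?_
    calc g q ≤ Gr q := hgle q q le_rfl
      _ ≤ lreg Gr t := hleM _ _ hq2

/-- every Cauchy sequence (a_n) gives rise to a probabilistic
1-Lipschitz map f with D(a_n,·) → f pointwise weakly and f(a_n) → H₀ weakly. -/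
theorem stmt12 {G : Type} (D : G → G → ℝ → ℝ)
    (star : (ℝ → ℝ) → (ℝ → ℝ) → (ℝ → ℝ)) (h : IsPMS D star)
    (hc : StarCont star) (a : ℕ → G) (ha : PCauchy D a) :
    ∃ f : G → ℝ → ℝ, Lip1 D star f ∧
      (∀ x, WConv (fun n => D (a n) x) (f x)) ∧
      WConv (fun n => f (a n)) H0 := by classical
  -- liminf function and its regularization
  set L : G → ℝ → ℝ := fun x s => Filter.liminf (fun n => D (a n) x s) atTop with hLdef
  have hD0 : ∀ p q t, 0 ≤ D p q t := fun p q t => (h.mem p q).2.1 t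
  have hD1 : ∀ p q t, D p q t ≤ 1 := fun p q t => (h.mem p q).2.2.1 t
  have hL0 : ∀ x s, 0 ≤ L x s := by
    intro x s
    exact Filter.le_liminf_of_le (bdd_le (fun n => hD1 (a n) x s)).isCoboundedUnder_ge
      (Eventually.of_forall fun n => hD0 (a n) x s)
  have hL1 : ∀ x s, L x s ≤ 1 := by
    intro x s
    exact Filter.liminf_le_of_le (bdd_ge (fun n => hD0 (a n) x s))
      (fun b hb => by
        obtain ⟨n, hn⟩ := hb.exists
        exact hn.trans (hD1 (a n) x s))
  have hLmono : ∀ x, Monotone (L x) := by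
    intro x s t hst
    exact Filter.liminf_le_liminf (Eventually.of_forall fun n => (h.mem (a n) x).1 hst)
      (bdd_ge (fun n => hD0 (a n) x s))
      (bdd_le (fun n => hD1 (a n) x t)).isCoboundedUnder_ge
  have hLz : ∀ x, ∀ s ≤ (0:ℝ), L x s = 0 := by
    intro x s hs
    have hz : ∀ n, D (a n) x s = 0 := fun n => (h.mem (a n) x).2.2.2.2 s hs
    simp only [hLdef, hz]
    exact Filter.liminf_const 0
  set f : G → ℝ → ℝ := fun x => lreg (L x) with hfdef
  have hfaux : ∀ x, MemDP (f x) ∧ (∀ s t, s < t → L x s ≤ f x t) ∧ (∀ t, f x t ≤ L x t) :=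
    fun x => lreg_aux (L x) (hLmono x) (hL0 x) (hL1 x) (hLz x)
  -- Cauchy sequences along subsequences converge weakly to H0
  have hCauchyW : ∀ p q : ℕ → ℕ, (∀ j, j ≤ p j) → (∀ j, j ≤ q j) →
      WConv (fun j => D (a (p j)) (a (q j))) H0 := by
    intro p q hp hq t _
    rcases le_or_gt t 0 with ht | ht
    · have hz : ∀ j, D (a (p j)) (a (q j)) t = 0 := fun j =>
        (h.mem (a (p j)) (a (q j))).2.2.2.2 t ht
      have hz0 : H0 t = 0 := by simp [H0, not_lt.2 ht]
      rw [hz0]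
      simp only [hz]
      exact tendsto_const_nhds
    · have h1 : H0 t = 1 := by simp [H0, ht]
      rw [h1, Metric.tendsto_atTop]
      intro ε hε
      obtain ⟨N, hN⟩ := ha t ht (ε/2) (by linarith)
      refine ⟨N, fun j hj => ?_⟩
      have hb := hN (p j) (le_trans hj (hp j)) (q j) (le_trans hj (hq j))
      have hub := hD1 (a (p j)) (a (q j)) t
      rw [Real.dist_eq, abs_sub_lt_iff]
      constructor <;> linarith
  -- the key inequality
  have key : ∀ x, ∀ s t : ℝ, s < t →
      Filter.limsup (fun n => D (a n) x s) atTop ≤ L x t := by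
    intro x s t hst
    refine le_of_forall_lt fun c hcc => ?_
    obtain ⟨c', hc1, hc2⟩ := exists_between hcc
    suffices hsuff : c' ≤ L x t by exact lt_of_lt_of_le hc1 hsuff
    -- pick a subsequence where the value at s exceeds c'
    have hfr : ∀ j : ℕ, ∃ᶠ k in atTop, c' < D (a k) x s := by
      intro j
      exact Filter.frequently_lt_of_lt_limsup
        (bdd_ge (fun n => hD0 (a n) x s)).isCoboundedUnder_le hc2
    obtain ⟨m, hm, hmc⟩ := Filter.extraction_forall_of_frequently hfr
    obtain ⟨ψ, M, hψ, hMemM, hWM⟩ := helly (fun j => D (a (m j)) x) (fun j => h.mem _ _)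
    set nn : ℕ → ℕ := fun j => m (ψ j) with hnn
    have hnnmono : StrictMono nn := hm.comp hψ
    have hWn : WConv (fun j => D (a (nn j)) x) M := hWM
    obtain ⟨τ, hτ, hτc⟩ := exists_continuousAt_mem_Ioo M hMemM.1 hst
    -- c' ≤ M τ
    have hcM : c' ≤ M τ := by
      refine ge_of_tendsto (hWn τ hτc) ?_
      refine Eventually.of_forall fun j => ?_
      exact le_trans (hmc (ψ j)).le ((h.mem (a (nn j)) x).1 hτ.1.le)
    -- M τ ≤ L x t
    have hML : M τ ≤ L x t := by
      by_contra hcon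
      push_neg at hcon
      obtain ⟨c'', hc1'', hc2''⟩ := exists_between hcon
      have hfr2 : ∀ j : ℕ, ∃ᶠ k in atTop, D (a k) x t < c'' := by
        intro j
        exact Filter.frequently_lt_of_liminf_lt
          (bdd_le (fun n => hD1 (a n) x t)).isCoboundedUnder_ge hc1''
      obtain ⟨p, hpmono, hpc⟩ := Filter.extraction_forall_of_frequently hfr2
      have hCW : WConv (fun j => D (a (p j)) (a (nn j))) H0 :=
        hCauchyW p nn (fun j => hpmono.le_apply) (fun j => hnnmono.le_apply)
      have hstarW : WConv (fun j => star (D (a (p j)) (a (nn j))) (D (a (nn j)) x))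
          (star H0 M) :=
        hc _ _ _ _ (fun j => h.mem _ _) (fun j => h.mem _ _) memDP_H0 hMemM hCW hWn
      have hH0M : star H0 M = M := by
        rw [h.tri.comm H0 M memDP_H0 hMemM, h.tri.ident M hMemM]
      rw [hH0M] at hstarW
      have htendτ := hstarW τ hτc
      have hub2 : ∀ j, star (D (a (p j)) (a (nn j))) (D (a (nn j)) x) τ ≤ c'' := by
        intro j
        calc star (D (a (p j)) (a (nn j))) (D (a (nn j)) x) τ
            ≤ D (a (p j)) x τ := h.triangle_ineq (a (p j)) (a (nn j)) x τ
          _ ≤ D (a (p j)) x t := (h.mem (a (p j)) x).1 hτ.2.le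
          _ ≤ c'' := (hpc j).le
      have : M τ ≤ c'' := le_of_tendsto htendτ (Eventually.of_forall hub2)
      linarith
    exact le_trans hcM hML
  -- the pointwise weak convergence
  have hW : ∀ x, WConv (fun n => D (a n) x) (f x) := by
    intro x
    apply wconv_of _ _ (hfaux x).1 (fun n t => hD0 (a n) x t) (fun n t => hD1 (a n) x t)
    · intro s t hst
      exact le_trans ((hfaux x).2.2 s) (hLmono x hst.le)
    · intro s t hst
      have h1 : s < (s + t)/2 := by linarith
      have h2 : (s + t)/2 < t := by linarith
      exact le_trans (key x s ((s+t)/2) h1) ((hfaux x).2.1 _ _ h2)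
  -- Lipschitz property
  have hLip : Lip1 D star f := by
    refine ⟨fun x => (hfaux x).1, ?_⟩
    intro x y t
    have hcomm : star (D x y) (f y) = star (f y) (D y x) := by
      rw [h.symm x y, h.tri.comm (D y x) (f y) (h.mem y x) (hfaux y).1]
    rw [hcomm]
    set hfn : ℕ → ℝ → ℝ := fun n => star (D (a n) y) (D y x) with hfn_def
    have hWc : WConv (fun _ : ℕ => D y x) (D y x) := fun t _ => tendsto_const_nhds
    have hstW : WConv hfn (star (f y) (D y x)) :=
      hc _ _ _ _ (fun n => h.mem (a n) y) (fun _ => h.mem y x) (hfaux y).1 (h.mem y x)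
        (hW y) hWc
    set hfun : ℝ → ℝ := star (f y) (D y x) with hfun_def
    have hMemh : MemDP hfun := h.tri.mem _ _ (hfaux y).1 (h.mem y x)
    -- show hfun t ≤ f x t
    refine le_of_forall_pos_le_add fun ε hε => ?_
    have hlc := hMemh.2.2.2.1 t
    have hev : {s | hfun t - ε < hfun s} ∈ 𝓝[<] t := by
      have : Ioi (hfun t - ε) ∈ 𝓝 (hfun t) := Ioi_mem_nhds (by linarith)
      exact hlc this
    rw [mem_nhdsLT_iff_exists_Ioo_subset] at hev
    obtain ⟨l, hl, hsub⟩ := hev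
    obtain ⟨s, hs, hsc⟩ := exists_continuousAt_mem_Ioo hfun hMemh.1 hl.out
    have hs1 : hfun t - ε < hfun s := hsub hs
    have hs2 : hfun s ≤ L x s := by
      have htd := hstW s hsc
      rw [← htd.liminf_eq]
      refine Filter.liminf_le_liminf
        (Eventually.of_forall fun n => h.triangle_ineq (a n) y x s)
        (bdd_ge (fun n => (h.tri.mem _ _ (h.mem (a n) y) (h.mem y x)).2.1 s))
        (bdd_le (fun n => hD1 (a n) x s)).isCoboundedUnder_ge
    have hs3 : L x s ≤ f x t := (hfaux x).2.1 s t hs.2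
    linarith
  refine ⟨f, hLip, hW, ?_⟩
  -- f (a n) → H0
  intro t _
  rcases le_or_gt t 0 with ht | ht
  · have hz : ∀ n, f (a n) t = 0 := fun n => (hfaux (a n)).1.2.2.2.2 t ht
    have hz0 : H0 t = 0 := by simp [H0, not_lt.2 ht]
    rw [hz0]
    simp only [hz]
    exact tendsto_const_nhds
  · have h1 : H0 t = 1 := by simp [H0, ht]
    rw [h1, Metric.tendsto_atTop]
    intro ε hε
    obtain ⟨N, hN⟩ := ha (t/2) (by linarith) (ε/2) (by linarith)
    refine ⟨N, fun n hn => ?_⟩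
    have hlow : 1 - ε/2 ≤ L (a n) (t/2) := by
      refine Filter.le_liminf_of_le (bdd_le (fun p => hD1 (a p) (a n) (t/2))).isCoboundedUnder_ge ?_
      filter_upwards [eventually_ge_atTop N] with p hp
      exact hN p hp n hn
    have hge : 1 - ε/2 ≤ f (a n) t :=
      le_trans hlow ((hfaux (a n)).2.1 (t/2) t (by linarith))
    have hub := (hfaux (a n)).1.2.2.1 t
    rw [Real.dist_eq, abs_sub_lt_iff]
    constructor <;> linarith
end
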